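/- Let D = conv{0, e₁, e₂, e₃} ⊆ ℝ³ be the standard tetrahedron and let Λ' be a full-rank lattice in ℝ³ containing ℤ³ such that for any two distinct vectors s, t ∈ Λ' the interiors of D + s and D + t are disjoint. Then the index [Λ' : ℤ³] is at most 2. -/

import Mathlib

open Pointwise MeasureTheory

/-- The standard basis vector `eᵢ` of `ℝ³`. -/
noncomputable def stdVec (i : Fin 3) : EuclideanSpace ℝ (Fin 3) :=
  EuclideanSpace.single i (1 : ℝ)

/-- The standard tetrahedron `conv {0, e₁, e₂, e₃} ⊆ ℝ³`. -/
noncomputable def stdTetrahedron : Set (EuclideanSpace ℝ (Fin 3)) :=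
  convexHull ℝ {0, stdVec 0, stdVec 1, stdVec 2}

/-- The standard integer lattice `ℤ³ ⊆ ℝ³`, i.e. the `ℤ`-span of the standard basis. -/
noncomputable def intLattice : Submodule ℤ (EuclideanSpace ℝ (Fin 3)) :=
  Submodule.span ℤ (Set.range stdVec)

abbrev E3 := EuclideanSpace ℝ (Fin 3)

lemma helper_sorted (a b c : ℝ) (ha : 0 ≤ a) (hab : a ≤ b) (hbc : b ≤ c) (hc : c < 1) :
    (a = 1/2 ∧ b = 1/2 ∧ c = 1/2) ∨
    ∃ p q r : ℤ, max (a - p) 0 + max (b - q) 0 + max (c - r) 0 < 1 ∧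
                 max ((p:ℝ) - a) 0 + max ((q:ℝ) - b) 0 + max ((r:ℝ) - c) 0 < 1 := by
  rcases lt_or_ge (a + b + c) 1 with h1 | h1
  · refine Or.inr ⟨0, 0, 0, ?_, ?_⟩
    · push_cast
      rw [sub_zero, sub_zero, sub_zero, max_eq_left ha, max_eq_left (le_trans ha hab),
        max_eq_left (le_trans (le_trans ha hab) hbc)]
      linarith
    · push_cast
      rw [zero_sub, zero_sub, zero_sub, max_eq_right (by linarith), max_eq_right (by linarith),
        max_eq_right (by linarith)]
      linarith
  · rcases lt_or_ge (a + b) 1 with h2 | h2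
    · refine Or.inr ⟨0, 0, 1, ?_, ?_⟩
      · push_cast
        rw [sub_zero, sub_zero, max_eq_left ha, max_eq_left (le_trans ha hab),
          max_eq_right (by linarith)]
        linarith
      · push_cast
        rw [zero_sub, zero_sub, max_eq_right (by linarith), max_eq_right (by linarith),
          max_eq_left (by linarith)]
        linarith
    · rcases lt_or_ge 1 (b + c) with h3 | h3
      · refine Or.inr ⟨0, 1, 1, ?_, ?_⟩
        · push_cast
          rw [sub_zero, max_eq_left ha, max_eq_right (by linarith), max_eq_right (by linarith)]
          linarith
        · push_cast
          rw [zero_sub, max_eq_right (by linarith), max_eq_left (by linarith),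
            max_eq_left (by linarith)]
          linarith
      · exact Or.inl ⟨by linarith, by linarith, by linarith⟩

lemma helper3 (u v w : ℝ) (hu : 0 ≤ u) (hv : 0 ≤ v) (hw : 0 ≤ w)
    (hu1 : u < 1) (hv1 : v < 1) (hw1 : w < 1) :
    (u = 1/2 ∧ v = 1/2 ∧ w = 1/2) ∨
    ∃ p q r : ℤ, max (u - p) 0 + max (v - q) 0 + max (w - r) 0 < 1 ∧
                 max ((p:ℝ) - u) 0 + max ((q:ℝ) - v) 0 + max ((r:ℝ) - w) 0 < 1 := by
  rcases le_total u v with h1 | h1 <;> rcases le_total v w with h2 | h2 <;>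
    rcases le_total u w with h3 | h3
  · rcases helper_sorted u v w hu h1 h2 hw1 with he | ⟨p, q, r, s1, s2⟩
    · exact Or.inl he
    · exact Or.inr ⟨p, q, r, by linarith, by linarith⟩
  · rcases helper_sorted u v w hu h1 h2 hw1 with he | ⟨p, q, r, s1, s2⟩
    · exact Or.inl he
    · exact Or.inr ⟨p, q, r, by linarith, by linarith⟩
  · rcases helper_sorted u w v hu h3 (by linarith) hv1 with ⟨e1, e2, e3⟩ | ⟨p, q, r, s1, s2⟩
    · exact Or.inl ⟨e1, e3, e2⟩
    · exact Or.inr ⟨p, r, q, by linarith, by linarith⟩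
  · rcases helper_sorted w u v hw h3 h1 hv1 with ⟨e1, e2, e3⟩ | ⟨p, q, r, s1, s2⟩
    · exact Or.inl ⟨e2, e3, e1⟩
    · exact Or.inr ⟨q, r, p, by linarith, by linarith⟩
  · rcases helper_sorted v u w hv h1 h3 hw1 with ⟨e1, e2, e3⟩ | ⟨p, q, r, s1, s2⟩
    · exact Or.inl ⟨e2, e1, e3⟩
    · exact Or.inr ⟨q, p, r, by linarith, by linarith⟩
  · rcases helper_sorted v w u hv h2 (by linarith) hu1 with ⟨e1, e2, e3⟩ | ⟨p, q, r, s1, s2⟩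
    · exact Or.inl ⟨e3, e1, e2⟩
    · exact Or.inr ⟨r, p, q, by linarith, by linarith⟩
  · rcases helper_sorted w v u hw h2 h1 hu1 with ⟨e1, e2, e3⟩ | ⟨p, q, r, s1, s2⟩
    · exact Or.inl ⟨e3, e2, e1⟩
    · exact Or.inr ⟨r, q, p, by linarith, by linarith⟩
  · rcases helper_sorted w v u hw h2 h1 hu1 with ⟨e1, e2, e3⟩ | ⟨p, q, r, s1, s2⟩
    · exact Or.inl ⟨e3, e2, e1⟩
    · exact Or.inr ⟨r, q, p, by linarith, by linarith⟩


lemma stdVec_apply (i j : Fin 3) : stdVec i j = if j = i then 1 else 0 := by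
  simp [stdVec, EuclideanSpace.single_apply]

lemma eq_sum (x : E3) : x = ∑ i : Fin 3, x i • stdVec i := by
  ext j
  have : (∑ i : Fin 3, x i • stdVec i) j = ∑ i : Fin 3, x i * stdVec i j := by
    rw [WithLp.ofLp_sum, Finset.sum_apply]; simp
  rw [this]
  simp [stdVec_apply, Fin.sum_univ_three]

lemma mem_intLattice_iff (x : E3) : x ∈ intLattice ↔ ∀ i, ∃ n : ℤ, x i = n := by
  constructor
  · intro hx
    induction hx using Submodule.span_induction with
    | mem v hv => obtain ⟨j, rfl⟩ := hv; intro i; refine ⟨if i = j then 1 else 0, ?_⟩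
                  rw [stdVec_apply]; split <;> simp
    | zero => intro i; exact ⟨0, by simp⟩
    | add a b _ _ ha hb => intro i; obtain ⟨n, hn⟩ := ha i; obtain ⟨m, hm⟩ := hb i
                           exact ⟨n + m, by simp [hn, hm]⟩
    | smul z a _ ha => intro i; obtain ⟨n, hn⟩ := ha i
                       exact ⟨z * n, by simp [hn]⟩
  · intro hx
    choose n hn using hx
    have : x = ∑ i : Fin 3, (n i) • stdVec i := by
      rw [eq_sum x]
      congr 1; funext i
      rw [hn i, ← Int.cast_smul_eq_zsmul ℝ]
    rw [this]
    exact Submodule.sum_mem _ fun i _ =>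
      Submodule.smul_mem _ _ (Submodule.subset_span ⟨i, rfl⟩)


lemma tet_subset : {x : E3 | (∀ i, 0 < x i) ∧ ∑ i, x i < 1} ⊆ stdTetrahedron := by
  rintro x ⟨h1, h2⟩
  rw [Fin.sum_univ_three] at h2
  set S : Set E3 := {0, stdVec 0, stdVec 1, stdVec 2} with hS
  set w : Fin 4 → ℝ := ![1 - ∑ i, x i, x 0, x 1, x 2] with hw
  set z : Fin 4 → E3 := ![0, stdVec 0, stdVec 1, stdVec 2] with hz
  have key := (convex_convexHull ℝ S).sum_mem (t := Finset.univ) (w := w) (z := z)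
    (fun i _ => by
      fin_cases i
      · show (0:ℝ) ≤ 1 - ∑ i, x i
        rw [Fin.sum_univ_three]
        linarith [h1 0, h1 1, h1 2]
      · exact le_of_lt (h1 0)
      · exact le_of_lt (h1 1)
      · exact le_of_lt (h1 2))
    (by simp [hw, Fin.sum_univ_four, Fin.sum_univ_three]; ring)
    (fun i _ => by fin_cases i <;> exact subset_convexHull ℝ S (by simp [hz, hS]))
  have hx : x = ∑ i : Fin 4, w i • z i := by
    ext j
    have : (∑ i : Fin 4, w i • z i) j = ∑ i : Fin 4, w i * z i j := by
      rw [WithLp.ofLp_sum, Finset.sum_apply]; simp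
    show x j = _
    rw [this, Fin.sum_univ_four]
    simp [hw, hz, stdVec_apply]
    fin_cases j <;> simp
  rw [stdTetrahedron, ← hS, hx]
  exact key

lemma isOpen_U : IsOpen {x : E3 | (∀ i, 0 < x i) ∧ ∑ i, x i < 1} := by
  have h1 : ∀ i : Fin 3, Continuous (fun x : E3 => x i) :=
    fun i => (EuclideanSpace.proj i).continuous
  have : {x : E3 | (∀ i, 0 < x i) ∧ ∑ i, x i < 1} =
      (⋂ i : Fin 3, {x : E3 | 0 < x i}) ∩ {x : E3 | ∑ i, x i < 1} := by
    ext x; simp [Set.mem_iInter]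
  rw [this]
  exact ((isOpen_iInter_of_finite fun i => isOpen_lt continuous_const (h1 i))).inter
    (isOpen_lt (by continuity) continuous_const)

lemma mem_interior_tet {x : E3} (hp : ∀ i, 0 < x i) (hs : ∑ i, x i < 1) :
    x ∈ interior stdTetrahedron :=
  interior_maximal tet_subset isOpen_U ⟨hp, hs⟩

lemma not_disjoint_of_small (v : E3) (h1 : ∑ i, max (v i) 0 < 1)
    (h2 : ∑ i, max (-(v i)) 0 < 1) :
    ¬ Disjoint (interior stdTetrahedron) (interior (v +ᵥ stdTetrahedron)) := by
  set δ : ℝ := (min (1 - ∑ i, max (v i) 0) (1 - ∑ i, max (-(v i)) 0)) / 6 with hδ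
  have hm1 := min_le_left (1 - ∑ i, max (v i) 0) (1 - ∑ i, max (-(v i)) 0)
  have hm2 := min_le_right (1 - ∑ i, max (v i) 0) (1 - ∑ i, max (-(v i)) 0)
  have hδpos : 0 < δ := by
    apply div_pos _ (by norm_num)
    exact lt_min (by linarith) (by linarith)
  set y : E3 := (WithLp.equiv 2 (Fin 3 → ℝ)).symm (fun i => max (v i) 0 + δ) with hy
  have hyi : ∀ i, y i = max (v i) 0 + δ := fun i => rfl
  have hy1 : y ∈ interior stdTetrahedron := by
    apply mem_interior_tet
    · intro i; rw [hyi i]; have := le_max_right (v i) 0; linarith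
    · have : ∑ i, y i = (∑ i, max (v i) 0) + 3 * δ := by
        rw [Fin.sum_univ_three, Fin.sum_univ_three, hyi, hyi, hyi]; ring
      rw [this]; linarith
  have hy2 : y ∈ interior (v +ᵥ stdTetrahedron) := by
    rw [interior_vadd]
    rw [Set.mem_vadd_set_iff_neg_vadd_mem]
    apply mem_interior_tet
    · intro i
      have : (-v +ᵥ y) i = max (-(v i)) 0 + δ := by
        show -v i + y i = _
        rw [hyi i]
        rcases le_total (v i) 0 with hv | hv
        · rw [max_eq_right hv, max_eq_left (by linarith)]; ring
        · rw [max_eq_left hv, max_eq_right (by linarith)]; ring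
      rw [this]; have := le_max_right (-(v i)) 0; linarith
    · have e : ∀ i, (-v +ᵥ y) i = max (-(v i)) 0 + δ := by
        intro i
        show -v i + y i = _
        rw [hyi i]
        rcases le_total (v i) 0 with hv | hv
        · rw [max_eq_right hv, max_eq_left (by linarith)]; ring
        · rw [max_eq_left hv, max_eq_right (by linarith)]; ring
      have : ∑ i, (-v +ᵥ y) i = (∑ i, max (-(v i)) 0) + 3 * δ := by
        rw [Fin.sum_univ_three, Fin.sum_univ_three, e, e, e]; ring
      rw [this]; linarith
  exact Set.not_disjoint_iff.mpr ⟨y, hy1, hy2⟩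

lemma step2 (x : E3) : (∀ i, ∃ n : ℤ, x i = n + 1/2) ∨
    ∃ z : E3, z ∈ intLattice ∧ (∑ i, max ((x - z) i) 0) < 1 ∧
      (∑ i, max (-((x - z) i)) 0) < 1 := by
  rcases helper3 (Int.fract (x 0)) (Int.fract (x 1)) (Int.fract (x 2))
    (Int.fract_nonneg _) (Int.fract_nonneg _) (Int.fract_nonneg _)
    (Int.fract_lt_one _) (Int.fract_lt_one _) (Int.fract_lt_one _) with
    ⟨e1, e2, e3⟩ | ⟨p, q, r, s1, s2⟩
  · left
    intro i
    refine ⟨⌊x i⌋, ?_⟩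
    have hfr : Int.fract (x i) = 1/2 := by fin_cases i <;> assumption
    have hfl := Int.floor_add_fract (x i)
    rw [hfr] at hfl
    linarith
  · right
    set m : Fin 3 → ℤ := ![⌊x 0⌋ + p, ⌊x 1⌋ + q, ⌊x 2⌋ + r] with hm
    set z : E3 := (WithLp.equiv 2 (Fin 3 → ℝ)).symm (fun i => (m i : ℝ)) with hz
    have hzi : ∀ i, z i = (m i : ℝ) := fun i => rfl
    refine ⟨z, (mem_intLattice_iff z).mpr fun i => ⟨m i, rfl⟩, ?_, ?_⟩
    · rw [Fin.sum_univ_three]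
      have e0 : (x - z) 0 = Int.fract (x 0) - p := by
        show x 0 - z 0 = _
        rw [hzi, ← Int.self_sub_floor]
        simp only [hm, Matrix.cons_val_zero, Matrix.cons_val_one, Matrix.head_cons, Matrix.cons_val_two, Matrix.tail_cons]
        push_cast
        ring
      have e1 : (x - z) 1 = Int.fract (x 1) - q := by
        show x 1 - z 1 = _
        rw [hzi, ← Int.self_sub_floor]
        simp only [hm, Matrix.cons_val_zero, Matrix.cons_val_one, Matrix.head_cons, Matrix.cons_val_two, Matrix.tail_cons]
        push_cast
        ring
      have e2 : (x - z) 2 = Int.fract (x 2) - r := by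
        show x 2 - z 2 = _
        rw [hzi, ← Int.self_sub_floor]
        simp only [hm, Matrix.cons_val_zero, Matrix.cons_val_one, Matrix.head_cons, Matrix.cons_val_two, Matrix.tail_cons]
        push_cast
        ring
      rw [e0, e1, e2]; exact s1
    · rw [Fin.sum_univ_three]
      have e0 : -((x - z) 0) = (p : ℝ) - Int.fract (x 0) := by
        show -(x 0 - z 0) = _
        rw [hzi, ← Int.self_sub_floor]
        simp only [hm, Matrix.cons_val_zero, Matrix.cons_val_one, Matrix.head_cons, Matrix.cons_val_two, Matrix.tail_cons]
        push_cast
        ring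
      have e1 : -((x - z) 1) = (q : ℝ) - Int.fract (x 1) := by
        show -(x 1 - z 1) = _
        rw [hzi, ← Int.self_sub_floor]
        simp only [hm, Matrix.cons_val_zero, Matrix.cons_val_one, Matrix.head_cons, Matrix.cons_val_two, Matrix.tail_cons]
        push_cast
        ring
      have e2 : -((x - z) 2) = (r : ℝ) - Int.fract (x 2) := by
        show -(x 2 - z 2) = _
        rw [hzi, ← Int.self_sub_floor]
        simp only [hm, Matrix.cons_val_zero, Matrix.cons_val_one, Matrix.head_cons, Matrix.cons_val_two, Matrix.tail_cons]
        push_cast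
        ring
      rw [e0, e1, e2]; exact s2


/-- main -/
theorem stmt_10 (Λ' : Submodule ℤ (EuclideanSpace ℝ (Fin 3)))
    [DiscreteTopology Λ'] [IsZLattice ℝ Λ']
    (hle : intLattice ≤ Λ')
    (h : ∀ s ∈ Λ', ∀ t ∈ Λ', s ≠ t →
      Disjoint (interior (s +ᵥ stdTetrahedron)) (interior (t +ᵥ stdTetrahedron))) :
    intLattice.toAddSubgroup.relIndex Λ'.toAddSubgroup ≠ 0 ∧
      intLattice.toAddSubgroup.relIndex Λ'.toAddSubgroup ≤ 2 := by
  classical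
  have key1 : ∀ v ∈ Λ', v ∉ intLattice → ∀ i, ∃ n : ℤ, v i = n + 1/2 := by
    intro v hv hvi
    rcases step2 v with hhalf | ⟨z, hz, s1, s2⟩
    · exact hhalf
    · exfalso
      have hw : v - z ∈ Λ' := sub_mem hv (hle hz)
      have hne : (0 : E3) ≠ v - z := by
        intro h0
        have hvz : v = z := sub_eq_zero.mp h0.symm
        exact hvi (hvz ▸ hz)
      have hd := h 0 (zero_mem _) (v - z) hw hne
      rw [zero_vadd] at hd
      exact not_disjoint_of_small (v - z) s1 s2 hd
  have key2 : ∀ v ∈ Λ', ∀ w ∈ Λ', v ∉ intLattice → w ∉ intLattice →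
      v - w ∈ intLattice := by
    intro v hv w hw hvi hwi
    rw [mem_intLattice_iff]
    intro i
    obtain ⟨n, hn⟩ := key1 v hv hvi i
    obtain ⟨m, hm⟩ := key1 w hw hwi i
    refine ⟨n - m, ?_⟩
    have : (v - w) i = v i - w i := by simp
    rw [this, hn, hm]; push_cast; ring
  set N := intLattice.toAddSubgroup.addSubgroupOf Λ'.toAddSubgroup with hN
  have claim : ∀ q q' : Λ'.toAddSubgroup ⧸ N, q = 0 ∨ q' = 0 ∨ q = q' := by
    intro q q'
    by_cases hq : q = 0
    · exact Or.inl hq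
    by_cases hq' : q' = 0
    · exact Or.inr (Or.inl hq')
    refine Or.inr (Or.inr ?_)
    induction q using QuotientAddGroup.induction_on with
    | H v =>
      induction q' using QuotientAddGroup.induction_on with
      | H w =>
        have hv : (v : E3) ∉ intLattice := by
          intro hc
          exact hq ((QuotientAddGroup.eq_zero_iff v).mpr
            ((AddSubgroup.mem_addSubgroupOf).mpr hc))
        have hw : (w : E3) ∉ intLattice := by
          intro hc
          exact hq' ((QuotientAddGroup.eq_zero_iff w).mpr
            ((AddSubgroup.mem_addSubgroupOf).mpr hc))
        have := key2 (v : E3) v.2 (w : E3) w.2 hv hw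
        refine (QuotientAddGroup.eq_iff_sub_mem).mpr ?_
        exact (AddSubgroup.mem_addSubgroupOf).mpr (by simpa using this)
  set f : (Λ'.toAddSubgroup ⧸ N) → Fin 2 := fun q => if q = 0 then 0 else 1 with hf
  have hinj : Function.Injective f := by
    intro a b hab
    rcases claim a b with h0 | h0 | h0
    · by_cases hb : b = 0
      · rw [h0, hb]
      · exfalso; simp [hf, h0, hb] at hab
    · by_cases ha : a = 0
      · rw [h0, ha]
      · exfalso; simp [hf, h0, ha] at hab
    · exact h0
  have hfin : Finite (Λ'.toAddSubgroup ⧸ N) := Finite.of_injective f hinj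
  have hcard : Nat.card (Λ'.toAddSubgroup ⧸ N) ≤ 2 := by
    have := Nat.card_le_card_of_injective f hinj
    simpa using this
  have hne : Nat.card (Λ'.toAddSubgroup ⧸ N) ≠ 0 :=
    Nat.card_ne_zero.mpr ⟨⟨0⟩, hfin⟩
  exact ⟨hne, hcard⟩
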